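/- Let n ≥ 4 and let m₁₂, m₂₂ ∈ ℂ with m₂₂ ≠ 1 and m₁₂ ≠ 0. Put M = [[0,m₁₂,0],[(1−m₂₂)/m₁₂,m₂₂,0],[0,0,1]] and let N = (n_{pq}) be a 3×3 complex matrix. If the pair (M,N) satisfies the SMₙ mixed relations on M_{n+1}(ℂ), then n₁₃ = n₂₃ = n₃₁ = n₃₂ = 0, n₃₃ = 1, and: if m₂₂ = 0 then n₁₂ = m₁₂²·n₂₁ and n₂₂ = n₁₁; if m₂₂ ≠ 0 then n₁₁ = (m₁₂n₂₁ + m₂₂ − 1)/(m₂₂ − 1), n₁₂ = −m₁₂²n₂₁/(m₂₂ − 1), and n₂₂ = 1 − m₁₂n₂₁. -/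

import Mathlib

open Matrix

def loc3 (m i : ℕ) (P : Matrix (Fin 3) (Fin 3) ℂ) : Matrix (Fin m) (Fin m) ℂ :=
  Matrix.of fun r s =>
    if (r : ℕ) = i - 1 ∧ (s : ℕ) = i - 1 then P 0 0
    else if (r : ℕ) = i - 1 ∧ (s : ℕ) = i then P 0 1
    else if (r : ℕ) = i - 1 ∧ (s : ℕ) = i + 1 then P 0 2
    else if (r : ℕ) = i ∧ (s : ℕ) = i - 1 then P 1 0
    else if (r : ℕ) = i ∧ (s : ℕ) = i then P 1 1
    else if (r : ℕ) = i ∧ (s : ℕ) = i + 1 then P 1 2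
    else if (r : ℕ) = i + 1 ∧ (s : ℕ) = i - 1 then P 2 0
    else if (r : ℕ) = i + 1 ∧ (s : ℕ) = i then P 2 1
    else if (r : ℕ) = i + 1 ∧ (s : ℕ) = i + 1 then P 2 2
    else if r = s then 1 else 0

/-- The pair `(M, N)` of 3×3 complex matrices satisfies the SMₙ mixed relations
on `M_{n+1}(ℂ)`. -/
def SMRel3 (n : ℕ) (M N : Matrix (Fin 3) (Fin 3) ℂ) : Prop :=
  (∀ i j : ℕ, 1 ≤ i → i ≤ n - 1 → 1 ≤ j → j ≤ n - 1 → (i + 2 ≤ j ∨ j + 2 ≤ i) →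
      loc3 (n + 1) i N * loc3 (n + 1) j N = loc3 (n + 1) j N * loc3 (n + 1) i N) ∧
  (∀ i j : ℕ, 1 ≤ i → i ≤ n - 1 → 1 ≤ j → j ≤ n - 1 → (i + 2 ≤ j ∨ j + 2 ≤ i) →
      loc3 (n + 1) i N * loc3 (n + 1) j M = loc3 (n + 1) j M * loc3 (n + 1) i N) ∧
  (∀ i : ℕ, 1 ≤ i → i ≤ n - 1 →
      loc3 (n + 1) i M * loc3 (n + 1) i N = loc3 (n + 1) i N * loc3 (n + 1) i M) ∧
  (∀ i : ℕ, 1 ≤ i → i ≤ n - 2 →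
      loc3 (n + 1) i M * loc3 (n + 1) (i + 1) M * loc3 (n + 1) i N
        = loc3 (n + 1) (i + 1) N * loc3 (n + 1) i M * loc3 (n + 1) (i + 1) M) ∧
  (∀ i : ℕ, 1 ≤ i → i ≤ n - 2 →
      loc3 (n + 1) (i + 1) M * loc3 (n + 1) i M * loc3 (n + 1) (i + 1) N
        = loc3 (n + 1) i N * loc3 (n + 1) (i + 1) M * loc3 (n + 1) i M)

def corner5 {m : ℕ} (h : 5 ≤ m) (A : Matrix (Fin m) (Fin m) ℂ) : Matrix (Fin 5) (Fin 5) ℂ :=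
  Matrix.of fun r s => A (Fin.castLE h r) (Fin.castLE h s)

lemma loc3_corner {m : ℕ} (h : 5 ≤ m) (i : ℕ) (P : Matrix (Fin 3) (Fin 3) ℂ) :
    corner5 h (loc3 m i P) = loc3 5 i P := by
  ext r s
  simp only [corner5, loc3, Matrix.of_apply, Fin.coe_castLE, Fin.castLE_inj]

lemma loc3_prop {m i : ℕ} (hi : i ≤ 3) (P : Matrix (Fin 3) (Fin 3) ℂ) :
    ∀ r s : Fin m, (r : ℕ) < 5 → 5 ≤ (s : ℕ) → loc3 m i P r s = 0 := by
  intro r s hr hs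
  have h1 : ¬ (s : ℕ) = i - 1 := by omega
  have h2 : ¬ (s : ℕ) = i := by omega
  have h3 : ¬ (s : ℕ) = i + 1 := by omega
  have h4 : ¬ r = s := fun e => by subst e; omega
  simp only [loc3, Matrix.of_apply, h1, h2, h3, h4, and_false, if_false]

lemma corner5_mul {m : ℕ} (hm : 5 ≤ m) (A B : Matrix (Fin m) (Fin m) ℂ)
    (hA : ∀ r s : Fin m, (r : ℕ) < 5 → 5 ≤ (s : ℕ) → A r s = 0) :
    corner5 hm (A * B) = corner5 hm A * corner5 hm B := by
  ext r s
  simp only [corner5, Matrix.of_apply, Matrix.mul_apply]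
  have key : (∑ k : Fin m, A (Fin.castLE hm r) k * B k (Fin.castLE hm s))
      = ∑ k ∈ (Finset.univ.map (Fin.castLEEmb hm)),
          A (Fin.castLE hm r) k * B k (Fin.castLE hm s) := by
    refine (Finset.sum_subset (Finset.subset_univ _) ?_).symm
    intro k _ hk
    have hk5 : ¬ (k : ℕ) < 5 := by
      intro h5
      exact hk (Finset.mem_map.mpr ⟨⟨(k : ℕ), h5⟩, Finset.mem_univ _, by
        simp [Fin.castLEEmb]⟩)
    rw [hA _ _ (by simpa using r.isLt) (by omega), zero_mul]
  rw [key, Finset.sum_map]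
  rfl

lemma loc3_5_1 (P : Matrix (Fin 3) (Fin 3) ℂ) : loc3 5 1 P =
    !![P 0 0, P 0 1, P 0 2, 0, 0;
       P 1 0, P 1 1, P 1 2, 0, 0;
       P 2 0, P 2 1, P 2 2, 0, 0;
       0, 0, 0, 1, 0;
       0, 0, 0, 0, 1] := by
  ext r s
  fin_cases r <;> fin_cases s <;> rfl

lemma loc3_5_2 (P : Matrix (Fin 3) (Fin 3) ℂ) : loc3 5 2 P =
    !![1, 0, 0, 0, 0;
       0, P 0 0, P 0 1, P 0 2, 0;
       0, P 1 0, P 1 1, P 1 2, 0;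
       0, P 2 0, P 2 1, P 2 2, 0;
       0, 0, 0, 0, 1] := by
  ext r s
  fin_cases r <;> fin_cases s <;> rfl

lemma loc3_5_3 (P : Matrix (Fin 3) (Fin 3) ℂ) : loc3 5 3 P =
    !![1, 0, 0, 0, 0;
       0, 1, 0, 0, 0;
       0, 0, P 0 0, P 0 1, P 0 2;
       0, 0, P 1 0, P 1 1, P 1 2;
       0, 0, P 2 0, P 2 1, P 2 2] := by
  ext r s
  fin_cases r <;> fin_cases s <;> rfl

set_option maxHeartbeats 2000000 in
theorem stmt10 (n : ℕ) (hn : 4 ≤ n) (m12 m22 : ℂ) (h22 : m22 ≠ 1) (h12 : m12 ≠ 0)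
    (N : Matrix (Fin 3) (Fin 3) ℂ)
    (h : SMRel3 n !![0, m12, 0; (1 - m22) / m12, m22, 0; 0, 0, 1] N) :
    N 0 2 = 0 ∧ N 1 2 = 0 ∧ N 2 0 = 0 ∧ N 2 1 = 0 ∧ N 2 2 = 1 ∧
    (m22 = 0 → N 0 1 = m12 ^ 2 * N 1 0 ∧ N 1 1 = N 0 0) ∧
    (m22 ≠ 0 → N 0 0 = (m12 * N 1 0 + m22 - 1) / (m22 - 1) ∧
      N 0 1 = -(m12 ^ 2 * N 1 0) / (m22 - 1) ∧
      N 1 1 = 1 - m12 * N 1 0) := by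
  obtain ⟨-, hNM, hcom, hA, hB⟩ := h
  set M : Matrix (Fin 3) (Fin 3) ℂ := !![0, m12, 0; (1 - m22) / m12, m22, 0; 0, 0, 1] with hM
  have h5 : 5 ≤ n + 1 := by omega
  have key1 : loc3 5 1 N * loc3 5 3 M = loc3 5 3 M * loc3 5 1 N := by
    have e := congrArg (corner5 h5) (hNM 1 3 (by omega) (by omega) (by omega) (by omega) (by omega))
    rwa [corner5_mul h5 _ _ (loc3_prop (by omega) _), corner5_mul h5 _ _ (loc3_prop (by omega) _),
      loc3_corner, loc3_corner] at e
  have key4 : loc3 5 1 M * loc3 5 1 N = loc3 5 1 N * loc3 5 1 M := by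
    have e := congrArg (corner5 h5) (hcom 1 (by omega) (by omega))
    rwa [corner5_mul h5 _ _ (loc3_prop (by omega) _), corner5_mul h5 _ _ (loc3_prop (by omega) _),
      loc3_corner, loc3_corner] at e
  have key2 : loc3 5 1 M * (loc3 5 2 M * loc3 5 1 N) = loc3 5 2 N * (loc3 5 1 M * loc3 5 2 M) := by
    have e := congrArg (corner5 h5) (hA 1 (by omega) (by omega))
    rw [mul_assoc, mul_assoc] at e
    rw [corner5_mul h5 _ _ (loc3_prop (by omega) _), corner5_mul h5 _ _ (loc3_prop (by omega) _),
        corner5_mul h5 _ _ (loc3_prop (by omega) _), corner5_mul h5 _ _ (loc3_prop (by omega) _)] at e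
    simpa only [loc3_corner] using e
  have key3 : loc3 5 2 M * (loc3 5 1 M * loc3 5 2 N) = loc3 5 1 N * (loc3 5 2 M * loc3 5 1 M) := by
    have e := congrArg (corner5 h5) (hB 1 (by omega) (by omega))
    rw [mul_assoc, mul_assoc] at e
    rw [corner5_mul h5 _ _ (loc3_prop (by omega) _), corner5_mul h5 _ _ (loc3_prop (by omega) _),
        corner5_mul h5 _ _ (loc3_prop (by omega) _), corner5_mul h5 _ _ (loc3_prop (by omega) _)] at e
    simpa only [loc3_corner] using e
  simp only [loc3_5_1, loc3_5_2, loc3_5_3] at key1 key2 key3 key4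
  have e02 := congrFun (congrFun key1 0) 2
  have e12 := congrFun (congrFun key1 1) 2
  have e20 := congrFun (congrFun key1 2) 0
  have e21 := congrFun (congrFun key1 2) 1
  have e22 := congrFun (congrFun key3 3) 3
  have f1 := congrFun (congrFun key4 0) 0
  have f2 := congrFun (congrFun key4 0) 1
  have f3 := congrFun (congrFun key2 2) 2
  have f4 := congrFun (congrFun key2 1) 2
  simp only [hM, Matrix.mul_apply, Fin.sum_univ_five, Matrix.of_apply, Matrix.cons_val', Matrix.cons_val, Matrix.empty_val', Matrix.cons_val_fin_one] at e02 e12 e20 e21 e22 f1 f2 f3 f4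
  norm_num [Matrix.cons_val] at e02 e12 e20 e21 e22 f1 f2 f3 f4
  rw [← e12, e22] at f3
  rw [← e02, e22] at f4
  refine ⟨e02.symm, e12.symm, e20, e21, e22, ?_, ?_⟩
  · rintro rfl
    field_simp at f1
    constructor
    · linear_combination -f1
    · have h2 : m12 * N 1 1 = m12 * N 0 0 := by linear_combination f2
      exact mul_left_cancel₀ h12 h2
  · intro h0
    have hsub : m22 - 1 ≠ 0 := sub_ne_zero.mpr h22
    field_simp at f1 f3 f4
    have n11 : N 1 1 = 1 - m12 * N 1 0 := by
      have h2 : m22 * N 1 1 = m22 * (1 - m12 * N 1 0) := mul_left_cancel₀ h12 (by linear_combination -f3)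
      exact mul_left_cancel₀ h0 h2
    have n01 : N 0 1 = m12 - N 0 0 * m12 := by
      have h2 : m22 * N 0 1 = m22 * (m12 - N 0 0 * m12) := mul_left_cancel₀ h12 (by linear_combination -f4)
      exact mul_left_cancel₀ h0 h2
    have hkey : m12 * N 1 0 = (1 - N 0 0) * (1 - m22) := by
      have h2 : m12 * (m12 * N 1 0) = m12 * ((1 - N 0 0) * (1 - m22)) := by
        linear_combination f1 + (1 - m22) * n01
      exact mul_left_cancel₀ h12 h2
    refine ⟨?_, ?_, n11⟩
    · rw [eq_div_iff hsub]
      linear_combination -hkey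
    · rw [eq_div_iff hsub]
      linear_combination (m22 - 1) * n01 + m12 * hkey
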